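/- Let Σ be a nontrivial commutative ring and m a positive integer that is invertible in Σ. The Σ-algebra homomorphism Σ[X]/(X^m − 1) → ∏_{d ∣ m} Σ[X]/(Φ_d(X)) induced by the quotient maps Σ[X]/(X^m − 1) → Σ[X]/(Φ_d(X)) (well defined since Φ_d divides X^m − 1 for each divisor d of m) is an isomorphism of Σ-algebras. -/

import Mathlib

open Polynomial

/-- The canonical map `Σ[X]/(X^m − 1) → Σ[X]/(Φ_d(X))` for a divisor `d` of `m`,
well defined since `Φ_d(X)` divides `X^m − 1`. -/
noncomputable def cycQuotFactor (S : Type*) [CommRing S] (m : ℕ) (hm : 0 < m)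
    (d : m.divisors) :
    (S[X] ⧸ Ideal.span {(X : S[X]) ^ m - 1}) →+*
      S[X] ⧸ Ideal.span {cyclotomic (d : ℕ) S} :=
  Ideal.Quotient.factor (Ideal.span_singleton_le_span_singleton.mpr (by
    rw [← prod_cyclotomic_eq_X_pow_sub_one hm S]
    exact Finset.dvd_prod_of_mem _ d.2))

/-- If `m` is invertible in a nontrivial commutative ring `Σ`, the canonical
homomorphism `Σ[X]/(X^m − 1) → ∏_{d ∣ m} Σ[X]/(Φ_d(X))` is an isomorphism of
`Σ`-algebras (it is bijective and commutes with the structure maps from `Σ`). -/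
theorem cyclotomic_decomposition_of_isUnit (S : Type*) [CommRing S] [Nontrivial S]
    (m : ℕ) (hm : 0 < m) (hu : IsUnit (m : S)) :
    Function.Bijective (Pi.ringHom (cycQuotFactor S m hm)) ∧
      ∀ s : S,
        Pi.ringHom (cycQuotFactor S m hm)
            (algebraMap S (S[X] ⧸ Ideal.span {(X : S[X]) ^ m - 1}) s) =
          algebraMap S (∀ d : m.divisors, S[X] ⧸ Ideal.span {cyclotomic (d : ℕ) S}) s := by
  classical
  have hsep : ((X : S[X]) ^ m - 1).Separable := by
    simpa using separable_X_pow_sub_C_unit (1 : Sˣ) hu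
  have hcop : ∀ d e : m.divisors, d ≠ e →
      IsCoprime (cyclotomic (d : ℕ) S) (cyclotomic (e : ℕ) S) := by
    intro d e hde
    have hdvd : cyclotomic (d : ℕ) S * cyclotomic (e : ℕ) S ∣ (X : S[X]) ^ m - 1 := by
      rw [← prod_cyclotomic_eq_X_pow_sub_one hm S]
      have : ({(d : ℕ), (e : ℕ)} : Finset ℕ) ⊆ m.divisors := by
        intro x hx
        simp only [Finset.mem_insert, Finset.mem_singleton] at hx
        rcases hx with rfl | rfl
        exacts [d.2, e.2]
      calc cyclotomic (d : ℕ) S * cyclotomic (e : ℕ) S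
          = ∏ x ∈ ({(d : ℕ), (e : ℕ)} : Finset ℕ), cyclotomic x S := by
            rw [Finset.prod_insert (by simpa using fun h => hde (Subtype.ext h)),
              Finset.prod_singleton]
        _ ∣ _ := Finset.prod_dvd_prod_of_subset _ _ _ this
    exact ((hsep.of_dvd hdvd)).isCoprime
  set I : m.divisors → Ideal S[X] := fun d => Ideal.span {cyclotomic (d : ℕ) S} with hI
  have hIcop : Pairwise (Function.onFun IsCoprime I) := fun d e hde =>
    (Ideal.isCoprime_span_singleton_iff _ _).mpr (hcop d e hde)
  have hspan : Ideal.span {(X : S[X]) ^ m - 1} = ⨅ d, I d := by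
    rw [hI, Ideal.iInf_span_singleton (fun d e hde => hcop d e hde),
      show (∏ d : m.divisors, cyclotomic (d : ℕ) S) = _ from
        (Finset.prod_coe_sort m.divisors (fun d => cyclotomic d S)).trans
          (prod_cyclotomic_eq_X_pow_sub_one hm S)]
  have key : Pi.ringHom (cycQuotFactor S m hm) =
      (Ideal.quotientInfToPiQuotient I).comp (Ideal.quotEquivOfEq hspan : _ ≃+* _).toRingHom := by
    refine RingHom.ext fun x => ?_
    obtain ⟨p, rfl⟩ := Ideal.Quotient.mk_surjective x
    funext d
    simp only [Pi.ringHom_apply, RingHom.coe_comp, Function.comp_apply, RingEquiv.toRingHom_eq_coe,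
      cycQuotFactor]
    rw [RingEquiv.coe_toRingHom, Ideal.quotEquivOfEq_mk hspan p, Ideal.quotientInfToPiQuotient_mk']
    rfl
  constructor
  · rw [key, RingHom.coe_comp]
    exact Function.Bijective.comp
      ⟨Ideal.quotientInfToPiQuotient_inj I, Ideal.quotientInfToPiQuotient_surj hIcop⟩
      (Ideal.quotEquivOfEq hspan).bijective
  · intro s
    rfl
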